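/- Let P be a finite set of 2n points in ℝ² (n ≥ 1) with no three points of P collinear, and let M be a pairwise crossing perfect matching on P. Then for every edge (a,b) of M, the line through a and b has exactly n − 1 points of P strictly on each of its two sides. -/

import Mathlib

noncomputable section

/-- The Euclidean plane. -/
abbrev Pt : Type := EuclideanSpace ℝ (Fin 2)

namespace CrossingAux

lemma pt_ext {v : Pt} (h0 : v 0 = 0) (h1 : v 1 = 0) : v = 0 := by
  ext i
  fin_cases i <;> simp [h0, h1]

lemma ker_lem {d v : Pt} (hd : d ≠ 0) (h : d 0 * v 1 - d 1 * v 0 = 0) :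
    ∃ c : ℝ, c • d = v := by
  have hd' : d 0 ≠ 0 ∨ d 1 ≠ 0 := by
    by_contra hc
    push_neg at hc
    exact hd (pt_ext hc.1 hc.2)
  rcases hd' with h0 | h1
  · refine ⟨v 0 / d 0, ?_⟩
    ext i
    fin_cases i
    · show v 0 / d 0 * d 0 = v 0
      field_simp
    · show v 0 / d 0 * d 1 = v 1
      field_simp
      nlinarith [h]
  · refine ⟨v 1 / d 1, ?_⟩
    ext i
    fin_cases i
    · show v 1 / d 1 * d 0 = v 0
      field_simp
      nlinarith [h]
    · show v 1 / d 1 * d 1 = v 1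
      field_simp

lemma ray_helper {e : Pt} {s t : ℝ} (h : 0 < s * t) : SameRay ℝ (s • e) (t • e) := by
  have hs : s ≠ 0 := by rintro rfl; simp at h
  have ht : t • e = (t / s) • s • e := by rw [smul_smul, div_mul_cancel₀ _ hs]
  rw [ht]
  refine SameRay.pos_smul_right (SameRay.refl _) ?_
  rcases mul_pos_iff.1 h with ⟨hs', ht'⟩ | ⟨hs', ht'⟩
  · exact div_pos ht' hs'
  · exact div_pos_of_neg_of_neg ht' hs'

lemma trichotomy {a b : Pt} (hab : a ≠ b) {x y : Pt}
    (hx : x ∉ affineSpan ℝ ({a, b} : Set Pt))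
    (hy : y ∉ affineSpan ℝ ({a, b} : Set Pt)) :
    (affineSpan ℝ ({a, b} : Set Pt)).SSameSide x y ∨
    (affineSpan ℝ ({a, b} : Set Pt)).SOppSide x y := by
  set s := affineSpan ℝ ({a, b} : Set Pt) with hs_def
  have hd : b - a ≠ 0 := sub_ne_zero.2 (Ne.symm hab)
  set d : Pt := b - a with hd_def
  set f : Pt → ℝ := fun v => d 0 * v 1 - d 1 * v 0 with hf
  have hmem : ∀ z : Pt, (∃ r : ℝ, r • d = z - a) → z ∈ s := by
    rintro z ⟨r, hr⟩
    have hz : (z - a) +ᵥ a = z := by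
      rw [vadd_eq_add, sub_add_cancel]
    rw [← hz]
    refine vadd_left_mem_affineSpan_pair.2 ⟨r, ?_⟩
    rw [vsub_eq_sub, ← hd_def]
    exact hr
  have hker : ∀ z : Pt, f (z - a) = 0 → z ∈ s := by
    intro z hz
    exact hmem z (ker_lem hd hz)
  have hx' : f (x - a) ≠ 0 := fun h => hx (hker x h)
  have hy' : f (y - a) ≠ 0 := fun h => hy (hker y h)
  set m : ℝ := d 0 ^ 2 + d 1 ^ 2 with hm
  have hm0 : 0 < m := by
    have hd' : d 0 ≠ 0 ∨ d 1 ≠ 0 := by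
      by_contra hc
      push_neg at hc
      exact hd (pt_ext hc.1 hc.2)
    rcases hd' with h | h
    · have : 0 < d 0 ^ 2 := by positivity
      nlinarith [sq_nonneg (d 1)]
    · have : 0 < d 1 ^ 2 := by positivity
      nlinarith [sq_nonneg (d 0)]
  set e : Pt := !₂[-(d 1), d 0] with he
  have he0 : e 0 = -(d 1) := rfl
  have he1 : e 1 = d 0 := rfl
  have hlin : ∀ (v : Pt) (c : ℝ), f (v - c • e) = f v - c * m := by
    intro v c
    show d 0 * (v - c • e) 1 - d 1 * (v - c • e) 0 = (d 0 * v 1 - d 1 * v 0) - c * m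
    have h1 : (v - c • e) 1 = v 1 - c * e 1 := rfl
    have h0 : (v - c • e) 0 = v 0 - c * e 0 := rfl
    rw [h0, h1, he0, he1, hm]
    ring
  have key : ∀ z : Pt, ∃ p ∈ s, z -ᵥ p = (f (z - a) / m) • e := by
    intro z
    have h0 : f (z - a - (f (z - a) / m) • e) = 0 := by
      rw [hlin]
      field_simp
      simp
    rcases ker_lem hd h0 with ⟨r, hr⟩
    refine ⟨(r • d) +ᵥ a, ?_, ?_⟩
    · exact hmem _ (by exact ⟨r, by rw [vadd_eq_add, add_sub_cancel_right]⟩)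
    · rw [vadd_eq_add, vsub_eq_sub, hr]
      abel
  obtain ⟨p₁, hp₁, hxp⟩ := key x
  obtain ⟨p₂, hp₂, hyp⟩ := key y
  have htx : f (x - a) / m ≠ 0 := div_ne_zero hx' hm0.ne'
  have hty : f (y - a) / m ≠ 0 := div_ne_zero hy' hm0.ne'
  rcases lt_trichotomy (f (x - a) / m * (f (y - a) / m)) 0 with hlt | heq | hgt
  · right
    refine ⟨⟨p₁, hp₁, p₂, hp₂, ?_⟩, hx, hy⟩
    have hpy : p₂ -ᵥ y = (-(f (y - a) / m)) • e := by
      rw [← neg_vsub_eq_vsub_rev, hyp, neg_smul]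
    rw [hxp, hpy]
    exact ray_helper (by nlinarith)
  · exact absurd heq (mul_ne_zero htx hty)
  · left
    refine ⟨⟨p₁, hp₁, p₂, hp₂, ?_⟩, hx, hy⟩
    rw [hxp, hyp]
    exact ray_helper hgt

end CrossingAux

theorem pairwise_crossing_halves (n : ℕ) (hn : 1 ≤ n)
    (P : Finset Pt) (hcard : P.card = 2 * n)
    (hgen : ∀ x ∈ P, ∀ y ∈ P, ∀ z ∈ P, x ≠ y → x ≠ z → y ≠ z →
      ¬ Collinear ℝ ({x, y, z} : Set Pt))
    (σ : Pt → Pt)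
    (hmap : ∀ x ∈ P, σ x ∈ P)
    (hinv : ∀ x ∈ P, σ (σ x) = x)
    (hfpf : ∀ x ∈ P, σ x ≠ x)
    (hcross : ∀ x ∈ P, ∀ y ∈ P, ({x, σ x} : Set Pt) ≠ {y, σ y} →
      (openSegment ℝ x (σ x) ∩ openSegment ℝ y (σ y)).Nonempty) :
    ∀ a ∈ P, ∀ p : Pt, p ∉ affineSpan ℝ ({a, σ a} : Set Pt) →
      {q ∈ (P : Set Pt) |
        (affineSpan ℝ ({a, σ a} : Set Pt)).SSameSide p q}.ncard = n - 1 := by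
  classical
  intro a ha p hp
  set b := σ a with hb_def
  have hbP : b ∈ P := hmap a ha
  have hba : b ≠ a := hfpf a ha
  set s := affineSpan ℝ ({a, b} : Set Pt) with hs_def
  have haS : a ∈ s := left_mem_affineSpan_pair ℝ a b
  have hbS : b ∈ s := right_mem_affineSpan_pair ℝ a b
  have hnot : ∀ q ∈ P, q ≠ a → q ≠ b → q ∉ s := by
    intro q hq hqa hqb hqs
    exact hgen q hq a ha b hbP hqa hqb hba.symm
      (collinear_insert_of_mem_affineSpan_pair hqs)
  have hopp : ∀ q ∈ P, q ≠ a → q ≠ b → s.SOppSide q (σ q) := by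
    intro q hq hqa hqb
    have hsqa : σ q ≠ a := by
      intro h
      apply hqb
      rw [hb_def, ← h, hinv q hq]
    have hsqb : σ q ≠ b := by
      intro h
      apply hqa
      have h1 := hinv q hq
      rw [h, hb_def, hinv a ha] at h1
      exact h1.symm
    have hne : ({q, σ q} : Set Pt) ≠ ({a, b} : Set Pt) := by
      intro h
      have : q ∈ ({a, b} : Set Pt) := h ▸ Set.mem_insert q _
      rcases this with h' | h'
      · exact hqa h'
      · exact hqb h'
    obtain ⟨z, hz1, hz2⟩ := hcross q hq a ha hne
    have hzs : z ∈ s := by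
      rw [openSegment_eq_image_lineMap] at hz2
      obtain ⟨t, _, hteq⟩ := hz2
      rw [← hteq]
      exact AffineMap.lineMap_mem_affineSpan_pair t a b
    have hsb : Sbtw ℝ q z (σ q) := by
      rw [openSegment_eq_image_lineMap] at hz1
      obtain ⟨u, hu, huz⟩ := hz1
      rw [← huz]
      exact sbtw_lineMap_iff.2 ⟨(hfpf q hq).symm, hu⟩
    exact hsb.sOppSide_of_notMem_of_mem (hnot q hq hqa hqb) hzs
  have hpnot : p ∉ s := hp
  set Q := P.filter (fun q => s.SSameSide p q) with hQ
  set R := P.filter (fun q => s.SOppSide p q) with hR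
  have hQmem : ∀ q ∈ Q, q ∈ P ∧ q ≠ a ∧ q ≠ b := by
    intro q hq
    obtain ⟨hqP, hside⟩ := Finset.mem_filter.1 hq
    have hqs : q ∉ s := hside.right_notMem
    exact ⟨hqP, fun h => hqs (h ▸ haS), fun h => hqs (h ▸ hbS)⟩
  have hRmem : ∀ q ∈ R, q ∈ P ∧ q ≠ a ∧ q ≠ b := by
    intro q hq
    obtain ⟨hqP, hside⟩ := Finset.mem_filter.1 hq
    have hqs : q ∉ s := hside.right_notMem
    exact ⟨hqP, fun h => hqs (h ▸ haS), fun h => hqs (h ▸ hbS)⟩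
  have hcard_eq : Q.card = R.card := by
    refine Finset.card_nbij' σ σ ?_ ?_ ?_ ?_
    · intro q hq
      obtain ⟨hqP, hqa, hqb⟩ := hQmem q hq
      have hside := (Finset.mem_filter.1 hq).2
      exact Finset.mem_filter.2 ⟨hmap q hqP, hside.trans_sOppSide (hopp q hqP hqa hqb)⟩
    · intro q hq
      obtain ⟨hqP, hqa, hqb⟩ := hRmem q hq
      have hside := (Finset.mem_filter.1 hq).2
      exact Finset.mem_filter.2 ⟨hmap q hqP, hside.trans (hopp q hqP hqa hqb)⟩
    · intro q hq
      exact hinv q (hQmem q hq).1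
    · intro q hq
      exact hinv q (hRmem q hq).1
  have hdisj : Disjoint Q R := by
    rw [Finset.disjoint_left]
    intro q hq hq'
    exact ((Finset.mem_filter.1 hq').2).not_sSameSide (Finset.mem_filter.1 hq).2
  have hunion : Q ∪ R = (P.erase a).erase b := by
    ext q
    constructor
    · intro hq
      rcases Finset.mem_union.1 hq with h | h
      · obtain ⟨hqP, hqa, hqb⟩ := hQmem q h
        exact Finset.mem_erase.2 ⟨hqb, Finset.mem_erase.2 ⟨hqa, hqP⟩⟩
      · obtain ⟨hqP, hqa, hqb⟩ := hRmem q h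
        exact Finset.mem_erase.2 ⟨hqb, Finset.mem_erase.2 ⟨hqa, hqP⟩⟩
    · intro hq
      obtain ⟨hqb, hq'⟩ := Finset.mem_erase.1 hq
      obtain ⟨hqa, hqP⟩ := Finset.mem_erase.1 hq'
      have hqs : q ∉ s := hnot q hqP hqa hqb
      rcases CrossingAux.trichotomy hba.symm hpnot hqs with h | h
      · exact Finset.mem_union_left _ (Finset.mem_filter.2 ⟨hqP, h⟩)
      · exact Finset.mem_union_right _ (Finset.mem_filter.2 ⟨hqP, h⟩)
  have hcard2 : Q.card + R.card = 2 * n - 2 := by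
    rw [← Finset.card_union_of_disjoint hdisj, hunion,
      Finset.card_erase_of_mem (Finset.mem_erase.2 ⟨hba, hbP⟩),
      Finset.card_erase_of_mem ha, hcard]
    omega
  have hQcard : Q.card = n - 1 := by omega
  have hset : {q ∈ (P : Set Pt) | s.SSameSide p q} = (Q : Set Pt) := by
    ext q
    simp [hQ, Finset.mem_filter]
  rw [hset, Set.ncard_coe_finset]
  exact hQcard
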